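/- Let p be a prime, t = v_p(b) ≥ 1, k a positive integer with ℓ = v_p(k), and r an integer with 2 ≤ r ≤ k. Assume p is odd, or p = 2 and t ≥ 2, or ℓ = 0. Then p^{ℓ+t+1} divides C(k, r) · b^r. -/

import Mathlib

lemma aux_three_pow (v : ℕ) (hv : 1 ≤ v) : v + 2 ≤ 3 ^ v := by
  induction v with
  | zero => omega
  | succ n ih =>
    rcases Nat.eq_or_lt_of_le hv with h | h
    · simp [← h]
    · have h1 : 1 ≤ n := by omega
      have := ih h1
      have : 3 ^ n * 1 ≤ 3 ^ n * 3 := by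
        apply Nat.mul_le_mul_left; omega
      calc n + 1 + 2 ≤ 3 ^ n + 1 := by omega
        _ ≤ 3 ^ n * 3 := by omega
        _ = 3 ^ (n + 1) := by ring

theorem stmt_7 (p : ℕ) (hp : p.Prime) (b : ℤ) (hb : b ≠ 0)
    (t : ℕ) (ht : t = padicValInt p b) (ht1 : 1 ≤ t)
    (k : ℕ) (hk : 0 < k) (ℓ : ℕ) (hℓ : ℓ = padicValNat p k)
    (r : ℕ) (hr2 : 2 ≤ r) (hrk : r ≤ k)
    (hcase : Odd p ∨ (p = 2 ∧ 2 ≤ t) ∨ ℓ = 0) :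
    (p : ℤ) ^ (ℓ + t + 1) ∣ (Nat.choose k r : ℤ) * b ^ r := by
  have hp1 : 1 < p := hp.one_lt
  haveI : Fact p.Prime := ⟨hp⟩
  -- p^t divides b
  have hptb : (p : ℤ) ^ t ∣ b := by
    have h1 : p ^ t ∣ b.natAbs := by
      rw [ht]
      exact pow_padicValNat_dvd
    have h2 : ((p : ℤ)) ^ t ∣ (b.natAbs : ℤ) := by
      exact_mod_cast Int.natCast_dvd_natCast.mpr h1
    exact Int.dvd_natAbs.mp h2
  have h1 : (p : ℤ) ^ (r * t) ∣ b ^ r := by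
    rw [mul_comm, pow_mul]
    exact pow_dvd_pow_of_dvd hptb r
  -- valuation of choose
  set v := padicValNat p r with hv
  set vC := padicValNat p (k.choose r) with hvC
  have hCdvd : (p : ℤ) ^ vC ∣ (k.choose r : ℤ) := by
    exact_mod_cast Int.natCast_dvd_natCast.mpr pow_padicValNat_dvd
  have hchoose_ne : k.choose r ≠ 0 := by
    have := Nat.choose_pos hrk; omega
  -- key valuation identity: ℓ ≤ vC + v
  have hkey : ℓ ≤ vC + v := by
    have hid : k * Nat.choose (k - 1) (r - 1) = Nat.choose k r * r := by
      have := Nat.add_one_mul_choose_eq (k - 1) (r - 1)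
      have hk1 : k - 1 + 1 = k := by omega
      have hr1 : r - 1 + 1 = r := by omega
      simpa [Nat.succ_eq_add_one, hk1, hr1] using this
    have hne : k * Nat.choose (k - 1) (r - 1) ≠ 0 := by
      have : 0 < Nat.choose (k - 1) (r - 1) := Nat.choose_pos (by omega)
      positivity
    have h3 : padicValNat p (k * Nat.choose (k - 1) (r - 1))
        = padicValNat p k + padicValNat p (Nat.choose (k - 1) (r - 1)) := by
      apply padicValNat.mul (by omega) (by
        have : 0 < Nat.choose (k - 1) (r - 1) := Nat.choose_pos (by omega)
        omega)
    have h4 : padicValNat p (Nat.choose k r * r) = vC + v := by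
      apply padicValNat.mul hchoose_ne (by omega)
    rw [hid] at h3
    rw [h4] at h3
    omega
  -- p^v ≤ r
  have hpvr : p ^ v ≤ r := Nat.le_of_dvd (by omega) pow_padicValNat_dvd
  -- key inequality
  have key : ℓ + t + 1 ≤ vC + r * t := by
    rcases hcase with hodd | ⟨hp2, ht2⟩ | hl0
    · -- p odd, p ≥ 3
      have hp3 : 3 ≤ p := by
        have h2 := hp.two_le
        have hne : p ≠ 2 := by rintro rfl; exact (by decide : ¬ Odd 2) hodd
        omega
      rcases Nat.eq_zero_or_pos v with hv0 | hv1
      · -- v = 0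
        have : 2 * t ≤ r * t := Nat.mul_le_mul_right t hr2
        omega
      · have h5 : v + 2 ≤ 3 ^ v := aux_three_pow v hv1
        have h6 : 3 ^ v ≤ p ^ v := Nat.pow_le_pow_left hp3 v
        have h7 : v + 2 ≤ r := by omega
        have h8 : (v + 2) * t ≤ r * t := Nat.mul_le_mul_right t h7
        have h9 : v ≤ v * t := Nat.le_mul_of_pos_right v (by omega)
        nlinarith
    · -- p = 2, t ≥ 2
      have hvlt : v < p ^ v := Nat.lt_pow_self hp1
      have h7 : v + 1 ≤ r := by omega
      rcases Nat.eq_zero_or_pos v with hv0 | hv1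
      · have : 2 * t ≤ r * t := Nat.mul_le_mul_right t hr2
        omega
      · have h8 : (v + 1) * t ≤ r * t := Nat.mul_le_mul_right t h7
        have h9 : 2 * v ≤ v * t := by
          calc 2 * v = v * 2 := by ring
            _ ≤ v * t := Nat.mul_le_mul_left v ht2
        nlinarith
    · -- ℓ = 0
      have : 2 * t ≤ r * t := Nat.mul_le_mul_right t hr2
      omega
  calc (p : ℤ) ^ (ℓ + t + 1) ∣ (p : ℤ) ^ (vC + r * t) := pow_dvd_pow _ key
    _ ∣ (Nat.choose k r : ℤ) * b ^ r := by
        rw [pow_add]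
        exact mul_dvd_mul hCdvd h1
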